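/- Jordan's theorem: if H is a proper subgroup of a finite group G, then there is an element g of G whose conjugacy class is disjoint from H; equivalently, G is not the union of the conjugates of a proper subgroup. -/

import Mathlib

theorem stmt_8 (G : Type*) [Group G] [Finite G] (H : Subgroup G) (hH : H ≠ ⊤) :
    ∃ g : G, ∀ x : G, x⁻¹ * g * x ∉ H := by
  classical
  have : Fintype G := Fintype.ofFinite G
  by_contra hc
  push_neg at hc
  -- hc : ∀ g, ∃ x, x⁻¹ * g * x ∈ H
  let F : G ⧸ H → Finset G :=
    fun q => Finset.image (fun h : H => q.out * h * q.out⁻¹) Finset.univ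
  have hmem : ∀ (q : G ⧸ H) (g : G), g ∈ F q ↔ q.out⁻¹ * g * q.out ∈ H := by
    intro q g
    simp only [F, Finset.mem_image, Finset.mem_univ, true_and]
    constructor
    · rintro ⟨h, rfl⟩
      group
      exact h.2
    · intro hg
      exact ⟨⟨_, hg⟩, by group⟩
  have hFcard : ∀ q, (F q).card = Fintype.card H := by
    intro q
    rw [← Finset.card_univ (α := H)]
    apply Finset.card_image_of_injective
    intro a b hab
    field_simp at hab
    exact Subtype.ext (mul_left_cancel (mul_right_cancel hab))
  have hone : ∀ q, (1 : G) ∈ F q := by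
    intro q; rw [hmem]; simpa using H.one_mem
  -- every g lies in some F q
  have hcover : ∀ g : G, ∃ q, g ∈ F q := by
    intro g
    obtain ⟨x, hx⟩ := hc g
    refine ⟨QuotientGroup.mk x, ?_⟩
    rw [hmem]
    have hx2 : (QuotientGroup.mk (s := H) x : G ⧸ H).out⁻¹ * x ∈ H := by
      have := Quotient.out_eq (QuotientGroup.mk (s := H) x)
      rw [← QuotientGroup.eq]
      exact this
    have : ((QuotientGroup.mk (s := H) x : G ⧸ H).out⁻¹ * x) * (x⁻¹ * g * x) *
        ((QuotientGroup.mk (s := H) x : G ⧸ H).out⁻¹ * x)⁻¹ ∈ H :=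
      H.mul_mem (H.mul_mem hx2 hx) (H.inv_mem hx2)
    convert this using 1
    group
  -- counting
  have hQ : Fintype (G ⧸ H) := Fintype.ofFinite _
  have hcard : Fintype.card G = H.index * Fintype.card H := by
    rw [← Nat.card_eq_fintype_card, ← Nat.card_eq_fintype_card, ← H.index_mul_card]
  have hidx : 2 ≤ H.index := Subgroup.one_lt_index_of_ne_top hH
  -- univ.erase 1 ⊆ biUnion of (F q).erase 1
  have hsub : (Finset.univ.erase (1 : G)) ⊆
      Finset.univ.biUnion (fun q : G ⧸ H => (F q).erase 1) := by
    intro g hg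
    obtain ⟨q, hq⟩ := hcover g
    simp only [Finset.mem_biUnion, Finset.mem_univ, true_and]
    exact ⟨q, Finset.mem_erase.mpr ⟨(Finset.mem_erase.mp hg).1, hq⟩⟩
  have hle := (Finset.card_le_card hsub).trans (Finset.card_biUnion_le)
  have h1 : (Finset.univ.erase (1 : G)).card = Fintype.card G - 1 := by
    rw [Finset.card_erase_of_mem (Finset.mem_univ _), Finset.card_univ]
  have h2 : ∀ q : G ⧸ H, ((F q).erase 1).card = Fintype.card H - 1 := by
    intro q
    rw [Finset.card_erase_of_mem (hone q), hFcard]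
  rw [h1] at hle
  simp only [h2, Finset.sum_const, smul_eq_mul, Finset.card_univ] at hle
  have hQcard : Fintype.card (G ⧸ H) = H.index := by
    rw [← Nat.card_eq_fintype_card]; rfl
  rw [hQcard] at hle
  have hHpos : 1 ≤ Fintype.card H := Fintype.card_pos
  have hGpos : 1 ≤ Fintype.card G := Fintype.card_pos
  -- hle : Fintype.card G - 1 ≤ H.index * (Fintype.card H - 1)
  have e : H.index * (Fintype.card H - 1) = H.index * Fintype.card H - H.index := by
    rw [Nat.mul_sub, mul_one]
  rw [e, ← hcard] at hle
  have hle2 : H.index ≤ Fintype.card G := by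
    rw [hcard]
    exact Nat.le_mul_of_pos_right _ hHpos
  omega
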